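/- Let f : (0,∞) → ℝ be Lebesgue-measurable and let V ⊆ (0,∞) be a nonempty open interval. Suppose that for each x ∈ V, f(qx) → 0 as q → ∞ through the positive rationals. Then f(t) → 0 as t → ∞ in the essential sense: for every c > 0 the set {t : |f(t)| > c} is not essentially unbounded, i.e. for some m the set {t > m : |f(t)| > c} has measure zero. -/

import Mathlib

open MeasureTheory Filter Set Topology
open scoped ENNReal NNReal Pointwise

lemma density_aux (S T : Set ℝ) (hS : MeasurableSet S) (hT : MeasurableSet T)
    (hpos : volume (S ∩ T) ≠ 0) :
    ∃ x ∈ S ∩ T, ∃ δ > (0:ℝ), ∀ r : ℝ, 0 < r → r ≤ δ →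
      ENNReal.ofReal (3/2 * r) ≤ volume (S ∩ Metric.closedBall x r) := by
  have hres : volume.restrict (S ∩ T) ≠ 0 := by
    intro h0
    apply hpos
    have := congrArg (fun μ : Measure ℝ => μ univ) h0
    simpa [Measure.restrict_apply_univ] using this
  haveI : (ae (volume.restrict (S ∩ T))).NeBot := ae_neBot.mpr hres
  have hmono : volume.restrict (S ∩ T) ≤ volume.restrict S :=
    Measure.restrict_mono inter_subset_left le_rfl
  have hdens := (Besicovitch.ae_tendsto_measure_inter_div volume S).filter_mono
    (ae_mono hmono)
  have hmem : ∀ᵐ x ∂volume.restrict (S ∩ T), x ∈ S ∩ T := ae_restrict_mem (hS.inter hT)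
  obtain ⟨x, hx, hxd⟩ := (hmem.and hdens).exists
  refine ⟨x, hx, ?_⟩
  have hev : ∀ᶠ r in 𝓝[>] (0:ℝ),
      (3/4 : ℝ≥0∞) < volume (S ∩ Metric.closedBall x r) / volume (Metric.closedBall x r) :=
    hxd.eventually (eventually_gt_nhds (ENNReal.div_lt_of_lt_mul (by norm_num)))
  obtain ⟨δ, hδ, hsub⟩ := mem_nhdsGT_iff_exists_Ioc_subset.mp hev
  refine ⟨δ, hδ, fun r hr hrδ => ?_⟩
  have h34 : (3/4 : ℝ≥0∞) < volume (S ∩ Metric.closedBall x r) / volume (Metric.closedBall x r) :=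
    hsub ⟨hr, hrδ⟩
  rw [Real.volume_closedBall] at h34
  have h2r : ENNReal.ofReal (2*r) ≠ 0 := by
    simp [ENNReal.ofReal_eq_zero]; linarith
  rw [ENNReal.lt_div_iff_mul_lt (Or.inl h2r) (Or.inl ENNReal.ofReal_ne_top)] at h34
  refine le_of_lt (lt_of_le_of_lt (le_of_eq ?_) h34)
  rw [show (3/4 : ℝ≥0∞) = ENNReal.ofReal (3/4) by
    rw [ENNReal.ofReal_div_of_pos (by norm_num)]; norm_num]
  rw [← ENNReal.ofReal_mul (by norm_num)]
  ring_nf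

theorem stmt_12 (f : ℝ → ℝ) (hf : Measurable f)
    (a b : ℝ) (ha : 0 < a) (hab : a < b)
    (hlim : ∀ x ∈ Ioo a b, Tendsto (fun q : ℚ => f ((q : ℝ) * x)) atTop (𝓝 0)) :
    ∀ c : ℝ, 0 < c → ∃ m : ℕ, volume {t : ℝ | (m : ℝ) < t ∧ c < |f t|} = 0 := by
  intro c hc
  by_contra hcon
  push_neg at hcon
  set E : Set ℝ := {t : ℝ | c < |f t|} with hEdef
  have hEmeas : MeasurableSet E := measurableSet_lt measurable_const hf.abs
  set A : ℕ → Set ℝ := fun n =>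
    Ioo a b ∩ ⋂ (q : ℚ), ⋂ (_ : (n:ℚ) ≤ q), {x : ℝ | |f ((q:ℝ)*x)| ≤ c} with hAdef
  have hAmeas : ∀ n, MeasurableSet (A n) := by
    intro n
    refine measurableSet_Ioo.inter (MeasurableSet.iInter fun q => MeasurableSet.iInter fun _ => ?_)
    exact measurableSet_le (hf.comp (measurable_const_mul _)).abs measurable_const
  -- the A n cover Ioo a b
  have hcover : Ioo a b ⊆ ⋃ n, A n := by
    intro x hx
    have hev : ∀ᶠ q : ℚ in atTop, |f ((q:ℝ)*x)| < c := by
      have hb : Metric.ball (0:ℝ) c ∈ 𝓝 (0:ℝ) := Metric.ball_mem_nhds _ hc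
      have := (hlim x hx).eventually_mem hb
      filter_upwards [this] with q hq
      simpa [Real.dist_eq] using hq
    obtain ⟨q₀, hq₀⟩ := eventually_atTop.mp hev
    refine mem_iUnion.mpr ⟨(max ⌈q₀⌉ 0).toNat, hx, ?_⟩
    simp only [mem_iInter, mem_setOf_eq]
    intro q hq
    refine le_of_lt (hq₀ q (le_trans ?_ hq))
    have h1 : q₀ ≤ (⌈q₀⌉ : ℚ) := Int.le_ceil q₀
    have h2 : (⌈q₀⌉ : ℚ) ≤ ((max ⌈q₀⌉ 0 : ℤ) : ℚ) := by exact_mod_cast le_max_left _ _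
    have h3 : ((max ⌈q₀⌉ 0 : ℤ) : ℚ) ≤ (((max ⌈q₀⌉ 0).toNat : ℕ) : ℚ) := by
      exact_mod_cast Int.self_le_toNat _
    linarith [h1, h2, h3]
  -- some A n has positive measure
  have hA : ∃ n, volume (A n) ≠ 0 := by
    by_contra h
    push_neg at h
    have h0 : volume (Ioo a b) = 0 :=
      measure_mono_null hcover (measure_iUnion_null h)
    rw [Real.volume_Ioo] at h0
    rw [ENNReal.ofReal_eq_zero] at h0
    linarith
  obtain ⟨n, hnA⟩ := hA
  have hkey : ∀ x ∈ A n, ∀ q : ℚ, (n:ℚ) ≤ q → ((q:ℝ)*x) ∉ E := by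
    intro x hx q hq hmem
    have h1 : |f ((q:ℝ)*x)| ≤ c := by
      have := hx.2
      simp only [mem_iInter, mem_setOf_eq] at this
      exact this q hq
    have h2 : c < |f ((q:ℝ)*x)| := hmem
    linarith
  -- density point of A n
  obtain ⟨x₀, hx₀A, δ₀, hδ₀, hA₀⟩ :=
    density_aux (A n) univ (hAmeas n) MeasurableSet.univ (by simpa using hnA)
  have hx₀ : x₀ ∈ A n := hx₀A.1
  have hx0pos : 0 < x₀ := lt_trans ha hx₀.1.1
  have hx0b : x₀ < b := hx₀.1.2
  -- choose m and density point of E beyond m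
  set m : ℕ := ⌈(n:ℝ) * b⌉₊ with hm
  have hmge : (n:ℝ) * b ≤ m := Nat.le_ceil _
  have hEmpos : volume (E ∩ Ioi (m:ℝ)) ≠ 0 := by
    have hset : E ∩ Ioi (m:ℝ) = {t : ℝ | (m:ℝ) < t ∧ c < |f t|} := by
      ext t; simp [hEdef, and_comm, mem_Ioi]
    rw [hset]
    exact hcon m
  obtain ⟨t, htm, δ₁, hδ₁, hEδ⟩ :=
    density_aux E (Ioi (m:ℝ)) hEmeas measurableSet_Ioi hEmpos
  have htgt : (m:ℝ) < t := htm.2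
  have htpos : 0 < t := lt_of_le_of_lt (Nat.cast_nonneg m) htgt
  -- choose the rational q and radius r
  set Q : ℝ := t / x₀ + 1 with hQ
  have hQpos : 0 < Q := by positivity
  have hQne : Q ≠ 0 := ne_of_gt hQpos
  set r : ℝ := min δ₀ (δ₁ / (2 * Q)) with hrdef
  have hr : 0 < r := lt_min hδ₀ (by positivity)
  have hrδ₀ : r ≤ δ₀ := min_le_left _ _
  have hrQ : r ≤ δ₁ / (2 * Q) := min_le_right _ _
  have hQr2 : Q * r ≤ δ₁ / 2 := by
    have h9 := mul_le_mul_of_nonneg_left hrQ hQpos.le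
    have h10 : Q * (δ₁ / (2 * Q)) = δ₁ / 2 := by
      field_simp
    linarith
  clear_value Q
  set η : ℝ := min 1 (min (δ₁ / (2 * x₀)) (t / x₀ * r / (4 * x₀))) with hηdef
  have hη : 0 < η := by
    refine lt_min one_pos (lt_min (by positivity) (by positivity))
  have hη1 : η ≤ 1 := min_le_left _ _
  have hη2 : η ≤ δ₁ / (2 * x₀) := le_trans (min_le_right _ _) (min_le_left _ _)
  have hη3 : η ≤ t / x₀ * r / (4 * x₀) := le_trans (min_le_right _ _) (min_le_right _ _)
  clear_value r η
  obtain ⟨q, hq1, hq2⟩ := exists_rat_btwn (lt_add_of_pos_right (t / x₀) hη)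
  have hqpos : 0 < (q:ℝ) := lt_trans (by positivity) hq1
  have hqn : (n:ℚ) ≤ q := by
    have hnb : (n:ℝ) * b ≤ t := le_of_lt (lt_of_le_of_lt hmge htgt)
    have h4 : (n:ℝ) ≤ t / x₀ := by
      rw [le_div_iff₀ hx0pos]
      nlinarith [Nat.cast_nonneg (α := ℝ) n]
    have : (n:ℝ) ≤ (q:ℝ) := le_of_lt (lt_of_le_of_lt h4 hq1)
    exact_mod_cast this
  set ρ : ℝ := (q:ℝ) * r with hρdef
  have hρ : 0 < ρ := mul_pos hqpos hr
  clear_value ρ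
  set d : ℝ := (q:ℝ) * x₀ - t with hddef
  have hd0 : 0 ≤ d := by
    have h20 : t / x₀ * x₀ ≤ (q:ℝ) * x₀ := mul_le_mul_of_nonneg_right hq1.le hx0pos.le
    rw [div_mul_cancel₀ _ (ne_of_gt hx0pos)] at h20
    rw [hddef]; linarith
  have hdη : d ≤ η * x₀ := by
    have h21 : (q:ℝ) * x₀ < (t / x₀ + η) * x₀ := mul_lt_mul_of_pos_right hq2 hx0pos
    rw [add_mul, div_mul_cancel₀ _ (ne_of_gt hx0pos)] at h21
    rw [hddef]; linarith
  clear_value d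
  have hdρ : d ≤ ρ / 4 := by
    have h6 : η * x₀ ≤ t / x₀ * r / 4 := by
      calc η * x₀ ≤ t / x₀ * r / (4 * x₀) * x₀ := mul_le_mul_of_nonneg_right hη3 hx0pos.le
        _ = t / x₀ * r / 4 := by field_simp
    have h7 : t / x₀ * r ≤ (q:ℝ) * r := mul_le_mul_of_nonneg_right hq1.le hr.le
    rw [hρdef]
    linarith
  set ρ' : ℝ := ρ + d with hρ'def
  have hρ'pos : 0 < ρ' := by rw [hρ'def]; linarith
  have hρ'ρ : ρ' ≤ 5/4 * ρ := by rw [hρ'def]; linarith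
  clear_value ρ'
  have hρ'δ₁ : ρ' ≤ δ₁ := by
    have hqQ : (q:ℝ) ≤ Q := by rw [hQ]; linarith
    have h8 : ρ ≤ δ₁ / 2 := by
      have h22 : (q:ℝ) * r ≤ Q * r := mul_le_mul_of_nonneg_right hqQ hr.le
      rw [hρdef]; linarith
    have h11 : d ≤ δ₁ / 2 := by
      have h23 : η * x₀ ≤ δ₁ / (2 * x₀) * x₀ := mul_le_mul_of_nonneg_right hη2 hx0pos.le
      have h13 : δ₁ / (2 * x₀) * x₀ = δ₁ / 2 := by field_simp
      linarith
    rw [hρ'def]; linarith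
  -- the two balls
  set B : Set ℝ := Metric.closedBall ((q:ℝ) * x₀) ρ with hBdef
  have hBsub : B ⊆ Metric.closedBall t ρ' := by
    intro y hy
    simp only [hBdef, Metric.mem_closedBall, Real.dist_eq] at hy ⊢
    rw [hρ'def]
    have h24 : |(q:ℝ) * x₀ - t| = d := by rw [hddef]; exact abs_of_nonneg (by rw [hddef] at hd0; exact hd0)
    calc |y - t| ≤ |y - (q:ℝ)*x₀| + |(q:ℝ)*x₀ - t| := abs_sub_le _ _ _
      _ ≤ ρ + d := by rw [h24]; linarith
  have hvolB : volume B = ENNReal.ofReal (2 * ρ) := Real.volume_closedBall _ _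
  -- density estimates
  have hEcb : ENNReal.ofReal (3/2 * ρ') ≤ volume (E ∩ Metric.closedBall t ρ') :=
    hEδ ρ' hρ'pos hρ'δ₁
  have hAcb : ENNReal.ofReal (3/2 * r) ≤ volume (A n ∩ Metric.closedBall x₀ r) :=
    hA₀ r hr hrδ₀
  -- the dilated set
  have hsmul_sub : (q:ℝ) • (A n ∩ Metric.closedBall x₀ r) ⊆ ((q:ℝ) • (A n)) ∩ B := by
    rintro y ⟨x, ⟨hxA, hxball⟩, rfl⟩
    refine ⟨smul_mem_smul_set hxA, ?_⟩
    simp only [hBdef, Metric.mem_closedBall, Real.dist_eq, smul_eq_mul]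
    simp only [Metric.mem_closedBall, Real.dist_eq] at hxball
    have h25 : (q:ℝ) * x - (q:ℝ) * x₀ = (q:ℝ) * (x - x₀) := by ring
    rw [h25, abs_mul, abs_of_nonneg hqpos.le, hρdef]
    exact mul_le_mul_of_nonneg_left hxball hqpos.le
  have hsmul_vol : volume ((q:ℝ) • (A n ∩ Metric.closedBall x₀ r))
      = ENNReal.ofReal (q:ℝ) * volume (A n ∩ Metric.closedBall x₀ r) := by
    rw [Measure.addHaar_smul_of_nonneg volume hqpos.le]
    norm_num [Module.finrank_self]
  have h1 : ENNReal.ofReal (3/2 * ρ) ≤ volume (((q:ℝ) • (A n)) ∩ B) := by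
    calc ENNReal.ofReal (3/2 * ρ) = ENNReal.ofReal (q:ℝ) * ENNReal.ofReal (3/2 * r) := by
          rw [← ENNReal.ofReal_mul hqpos.le]
          congr 1
          rw [hρdef]; ring
      _ ≤ ENNReal.ofReal (q:ℝ) * volume (A n ∩ Metric.closedBall x₀ r) :=
          mul_le_mul_right hAcb _
      _ = volume ((q:ℝ) • (A n ∩ Metric.closedBall x₀ r)) := hsmul_vol.symm
      _ ≤ volume (((q:ℝ) • (A n)) ∩ B) := measure_mono hsmul_sub
  have h2 : ENNReal.ofReal (2 * ρ - 1/2 * ρ') ≤ volume (E ∩ B) := by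
    have hdiff : volume (Metric.closedBall t ρ' \ B) = ENNReal.ofReal (2 * ρ' - 2 * ρ) := by
      rw [measure_diff hBsub measurableSet_closedBall.nullMeasurableSet
        (by rw [hvolB]; exact ENNReal.ofReal_ne_top)]
      rw [Real.volume_closedBall, hvolB, ← ENNReal.ofReal_sub _ (by linarith)]
    have hsplit : volume (E ∩ Metric.closedBall t ρ')
        ≤ volume (E ∩ B) + volume (Metric.closedBall t ρ' \ B) := by
      refine le_trans (measure_mono ?_) (measure_union_le _ _)
      intro y hy
      obtain ⟨hyE, hyball⟩ := hy
      by_cases hyB : y ∈ B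
      · exact Or.inl ⟨hyE, hyB⟩
      · exact Or.inr ⟨hyball, hyB⟩
    rw [hdiff] at hsplit
    have h14 := le_trans hEcb hsplit
    have h15 : ENNReal.ofReal (3/2 * ρ') - ENNReal.ofReal (2 * ρ' - 2 * ρ) ≤ volume (E ∩ B) :=
      tsub_le_iff_right.mpr h14
    calc ENNReal.ofReal (2 * ρ - 1/2 * ρ')
        = ENNReal.ofReal (3/2 * ρ' - (2 * ρ' - 2 * ρ)) := by congr 1; ring
      _ = ENNReal.ofReal (3/2 * ρ') - ENNReal.ofReal (2 * ρ' - 2 * ρ) :=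
          ENNReal.ofReal_sub _ (by linarith)
      _ ≤ volume (E ∩ B) := h15
  -- disjointness and contradiction
  have hdisj : Disjoint (((q:ℝ) • (A n)) ∩ B) (E ∩ B) := by
    rw [Set.disjoint_left]
    rintro y ⟨hyA, _⟩ ⟨hyE, _⟩
    obtain ⟨x, hxA, rfl⟩ := hyA
    exact hkey x hxA q hqn (by simpa [smul_eq_mul] using hyE)
  have hsum : volume (((q:ℝ) • (A n)) ∩ B) + volume (E ∩ B) ≤ volume B := by
    rw [← measure_union hdisj (hEmeas.inter (by rw [hBdef]; exact measurableSet_closedBall))]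
    exact measure_mono (union_subset inter_subset_right inter_subset_right)
  have hfinal : ENNReal.ofReal (3/2 * ρ) + ENNReal.ofReal (2 * ρ - 1/2 * ρ')
      ≤ ENNReal.ofReal (2 * ρ) := by
    rw [← hvolB]
    exact le_trans (add_le_add h1 h2) hsum
  rw [← ENNReal.ofReal_add (by linarith) (by linarith)] at hfinal
  rw [ENNReal.ofReal_le_ofReal_iff (by linarith)] at hfinal
  linarith
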